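/- Let k ≥ 2 and let G be a red-blue edge-colored graph that contains a blue path on k vertices with end vertices x and y, a vertex-disjoint path v₁v₂v₃v₄ whose edge v₁v₂ is blue and whose edges v₂v₃ and v₃v₄ are red, a further vertex v₅ distinct from all of these, and three further colored edges yv₄, v₂v₅, and v₄v₅ (each colored red or blue). Then G contains either a red path on 4 vertices or a blue path on k+4 vertices. -/
import Mathlib


open SimpleGraph

/-- `H` is contained as a (not necessarily induced) subgraph of `G`,
i.e. `G` contains a copy of `H`. -/
def ContainsCopy {α V : Type*} (H : SimpleGraph α) (G : SimpleGraph V) : Prop :=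
  ∃ f : α → V, Function.Injective f ∧ ∀ ⦃a b⦄, H.Adj a b → G.Adj (f a) (f b)

/-- Auxiliary: four distinct consecutively adjacent vertices give a copy of `P₄`. -/
lemma p4copy {V : Type*} (R : SimpleGraph V) (a b c d : V)
    (hab : R.Adj a b) (hbc : R.Adj b c) (hcd : R.Adj c d)
    (nab : a ≠ b) (nac : a ≠ c) (nad : a ≠ d) (nbc : b ≠ c) (nbd : b ≠ d) (ncd : c ≠ d) :
    ContainsCopy (SimpleGraph.pathGraph 4) R := by
  refine ⟨![a,b,c,d], ?_, ?_⟩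
  · intro i j hij
    fin_cases i <;> fin_cases j <;> simp_all
  · intro i j hij
    rw [SimpleGraph.pathGraph_adj] at hij
    have h1 := hab.symm; have h2 := hbc.symm; have h3 := hcd.symm
    fin_cases i <;> fin_cases j <;> simp_all

set_option maxHeartbeats 1600000 in
/-- Pattern `brr` of Lemma 4: let `k ≥ 2` and let `G` be a red-blue edge-colored graph
(red edges `R`, blue edges `B`) containing a blue path `w₁…w_k` with ends `x = w₁` and
`y = w_k`, a vertex-disjoint path `v₁v₂v₃v₄` with `v₁v₂` blue and `v₂v₃`, `v₃v₄` red,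
a further vertex `v₅` distinct from all of these, and further colored edges `yv₄`, `v₂v₅`,
`v₄v₅` (each red or blue). Then `G` contains a red `P₄` or a blue `P_{k+4}`. -/
theorem lemma_pattern_brr (V : Type*) (R B : SimpleGraph V) (hdisj : Disjoint R B)
    (k : ℕ) (hk : 2 ≤ k) (w : Fin k → V) (v₁ v₂ v₃ v₄ v₅ : V)
    (hw : Function.Injective w)
    (hvnodup : ([v₁, v₂, v₃, v₄, v₅] : List V).Nodup)
    (hwv : ∀ i, w i ∉ ({v₁, v₂, v₃, v₄, v₅} : Set V))
    (hwpath : ∀ i j : Fin k, (j : ℕ) = (i : ℕ) + 1 → B.Adj (w i) (w j))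
    (hb₁ : B.Adj v₁ v₂) (hr₁ : R.Adj v₂ v₃) (hr₂ : R.Adj v₃ v₄)
    (e₁ : R.Adj (w ⟨k - 1, by omega⟩) v₄ ∨ B.Adj (w ⟨k - 1, by omega⟩) v₄)
    (e₂ : R.Adj v₂ v₅ ∨ B.Adj v₂ v₅)
    (e₃ : R.Adj v₄ v₅ ∨ B.Adj v₄ v₅) :
    ContainsCopy (SimpleGraph.pathGraph 4) R ∨ ContainsCopy (SimpleGraph.pathGraph (k + 4)) B := by
  simp only [List.nodup_cons, List.mem_cons, List.not_mem_nil, or_false,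
    List.mem_singleton, not_or] at hvnodup
  obtain ⟨⟨n12, n13, n14, n15⟩, ⟨n23, n24, n25⟩, ⟨n34, n35⟩, n45, -⟩ := hvnodup
  have hwv' : ∀ i, w i ≠ v₁ ∧ w i ≠ v₂ ∧ w i ≠ v₃ ∧ w i ≠ v₄ ∧ w i ≠ v₅ := by
    intro i
    have := hwv i
    simp only [Set.mem_insert_iff, Set.mem_singleton_iff, not_or] at this
    exact this
  obtain ⟨hy1, hy2, hy3, hy4, hy5⟩ := hwv' ⟨k - 1, by omega⟩
  rcases e₁ with e₁ | e₁
  · exact Or.inl (p4copy R v₂ v₃ v₄ _ hr₁ hr₂ e₁.symm n23 n24 (Ne.symm hy2) n34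
      (Ne.symm hy3) (Ne.symm hy4))
  rcases e₂ with e₂ | e₂
  · exact Or.inl (p4copy R v₅ v₂ v₃ v₄ e₂.symm hr₁ hr₂ (Ne.symm n25) (Ne.symm n35)
      (Ne.symm n45) n23 n24 n34)
  rcases e₃ with e₃ | e₃
  · exact Or.inl (p4copy R v₂ v₃ v₄ v₅ hr₁ hr₂ e₃ n23 n24 n25 n34 n35 n45)
  -- all three extra edges are blue: take the blue path v₁ v₂ v₅ v₄ w_{k-1} w_{k-2} … w₀
  right
  refine ⟨fun i => if (i : ℕ) = 0 then v₁ else if (i : ℕ) = 1 then v₂ else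
      if (i : ℕ) = 2 then v₅ else if (i : ℕ) = 3 then v₄ else
        w ⟨min (k - 1) (k + 3 - i), by omega⟩, ?_, ?_⟩
  · -- injectivity
    intro i j hij
    have hik := i.isLt
    have hjk := j.isLt
    have hwvi := hwv' ⟨min (k - 1) (k + 3 - (i : ℕ)), by omega⟩
    have hwvj := hwv' ⟨min (k - 1) (k + 3 - (j : ℕ)), by omega⟩
    simp only at hij
    rcases (by omega : (i : ℕ) = 0 ∨ (i : ℕ) = 1 ∨ (i : ℕ) = 2 ∨ (i : ℕ) = 3 ∨
        4 ≤ (i : ℕ)) with hi | hi | hi | hi | hi <;>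
      [ rw [if_pos hi] at hij;
        rw [if_neg (by omega : ¬(i : ℕ) = 0), if_pos hi] at hij;
        rw [if_neg (by omega : ¬(i : ℕ) = 0), if_neg (by omega : ¬(i : ℕ) = 1),
          if_pos hi] at hij;
        rw [if_neg (by omega : ¬(i : ℕ) = 0), if_neg (by omega : ¬(i : ℕ) = 1),
          if_neg (by omega : ¬(i : ℕ) = 2), if_pos hi] at hij;
        rw [if_neg (by omega : ¬(i : ℕ) = 0), if_neg (by omega : ¬(i : ℕ) = 1),
          if_neg (by omega : ¬(i : ℕ) = 2), if_neg (by omega : ¬(i : ℕ) = 3)] at hij ]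
    all_goals
    rcases (by omega : (j : ℕ) = 0 ∨ (j : ℕ) = 1 ∨ (j : ℕ) = 2 ∨ (j : ℕ) = 3 ∨
        4 ≤ (j : ℕ)) with hj | hj | hj | hj | hj <;>
      [ rw [if_pos hj] at hij;
        rw [if_neg (by omega : ¬(j : ℕ) = 0), if_pos hj] at hij;
        rw [if_neg (by omega : ¬(j : ℕ) = 0), if_neg (by omega : ¬(j : ℕ) = 1),
          if_pos hj] at hij;
        rw [if_neg (by omega : ¬(j : ℕ) = 0), if_neg (by omega : ¬(j : ℕ) = 1),
          if_neg (by omega : ¬(j : ℕ) = 2), if_pos hj] at hij;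
        rw [if_neg (by omega : ¬(j : ℕ) = 0), if_neg (by omega : ¬(j : ℕ) = 1),
          if_neg (by omega : ¬(j : ℕ) = 2), if_neg (by omega : ¬(j : ℕ) = 3)] at hij ] <;>
    first
      | exact Fin.ext (by omega)
      | exact Fin.ext (by have h := hw hij; rw [Fin.mk.injEq] at h; omega)
      | exact absurd hij (by
          first
            | exact n12 | exact Ne.symm n12 | exact n14 | exact Ne.symm n14
            | exact n15 | exact Ne.symm n15 | exact n24 | exact Ne.symm n24
            | exact n25 | exact Ne.symm n25 | exact n45 | exact Ne.symm n45
            | exact hwvi.1 | exact Ne.symm hwvi.1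
            | exact hwvi.2.1 | exact Ne.symm hwvi.2.1
            | exact hwvi.2.2.2.1 | exact Ne.symm hwvi.2.2.2.1
            | exact hwvi.2.2.2.2 | exact Ne.symm hwvi.2.2.2.2
            | exact hwvj.1 | exact Ne.symm hwvj.1
            | exact hwvj.2.1 | exact Ne.symm hwvj.2.1
            | exact hwvj.2.2.2.1 | exact Ne.symm hwvj.2.2.2.1
            | exact hwvj.2.2.2.2 | exact Ne.symm hwvj.2.2.2.2)
  · -- adjacency
    intro i j hij
    rw [SimpleGraph.pathGraph_adj] at hij
    have key : ∀ a b : Fin (k + 4), (a : ℕ) + 1 = (b : ℕ) →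
        B.Adj (if (a : ℕ) = 0 then v₁ else if (a : ℕ) = 1 then v₂ else
          if (a : ℕ) = 2 then v₅ else if (a : ℕ) = 3 then v₄ else
            w ⟨min (k - 1) (k + 3 - a), by omega⟩)
          (if (b : ℕ) = 0 then v₁ else if (b : ℕ) = 1 then v₂ else
          if (b : ℕ) = 2 then v₅ else if (b : ℕ) = 3 then v₄ else
            w ⟨min (k - 1) (k + 3 - b), by omega⟩) := by
      intro a b hab
      have hak := a.isLt
      have hbk := b.isLt
      rcases (by omega : (a : ℕ) = 0 ∨ (a : ℕ) = 1 ∨ (a : ℕ) = 2 ∨ (a : ℕ) = 3 ∨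
        4 ≤ (a : ℕ)) with ha | ha | ha | ha | ha
      · -- a = 0, b = 1 : edge v₁v₂
        rw [if_pos ha, if_neg (by omega : ¬(b : ℕ) = 0), if_pos (by omega : (b : ℕ) = 1)]
        exact hb₁
      · -- a = 1, b = 2 : edge v₂v₅
        rw [if_neg (by omega : ¬(a : ℕ) = 0), if_pos ha, if_neg (by omega : ¬(b : ℕ) = 0),
          if_neg (by omega : ¬(b : ℕ) = 1), if_pos (by omega : (b : ℕ) = 2)]
        exact e₂
      · -- a = 2, b = 3 : edge v₅v₄
        rw [if_neg (by omega : ¬(a : ℕ) = 0), if_neg (by omega : ¬(a : ℕ) = 1), if_pos ha,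
          if_neg (by omega : ¬(b : ℕ) = 0), if_neg (by omega : ¬(b : ℕ) = 1),
          if_neg (by omega : ¬(b : ℕ) = 2), if_pos (by omega : (b : ℕ) = 3)]
        exact e₃.symm
      · -- a = 3, b = 4 : edge v₄y with y = w_{k-1}
        rw [if_neg (by omega : ¬(a : ℕ) = 0), if_neg (by omega : ¬(a : ℕ) = 1),
          if_neg (by omega : ¬(a : ℕ) = 2), if_pos ha,
          if_neg (by omega : ¬(b : ℕ) = 0), if_neg (by omega : ¬(b : ℕ) = 1),
          if_neg (by omega : ¬(b : ℕ) = 2), if_neg (by omega : ¬(b : ℕ) = 3)]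
        have hidx : (⟨min (k - 1) (k + 3 - (b : ℕ)), by omega⟩ : Fin k)
            = ⟨k - 1, by omega⟩ := Fin.mk_eq_mk.mpr (by omega)
        rw [hidx]
        exact e₁.symm
      · -- a, b ≥ 4 : edges of the blue path w
        rw [if_neg (by omega : ¬(a : ℕ) = 0), if_neg (by omega : ¬(a : ℕ) = 1),
          if_neg (by omega : ¬(a : ℕ) = 2), if_neg (by omega : ¬(a : ℕ) = 3),
          if_neg (by omega : ¬(b : ℕ) = 0), if_neg (by omega : ¬(b : ℕ) = 1),
          if_neg (by omega : ¬(b : ℕ) = 2), if_neg (by omega : ¬(b : ℕ) = 3)]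
        exact (hwpath ⟨min (k - 1) (k + 3 - (b : ℕ)), by omega⟩
          ⟨min (k - 1) (k + 3 - (a : ℕ)), by omega⟩
          (by show min (k - 1) (k + 3 - (a : ℕ)) = min (k - 1) (k + 3 - (b : ℕ)) + 1
              omega)).symm
    rcases hij with h | h
    · exact key i j h
    · exact (key j i h).symm
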